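/- Under the prior (1−w)δ₀ + w γ(·;c) with γ symmetric about c and unimodal, and likelihood X|μ ∼ N(μ,1), the posterior median δ(x;w,c) satisfies |δ(x;w,c)| ≤ |x| ∨ |c| for all x ∈ ℝ, all w ∈ [0,1] and all c ∈ ℝ. -/

import Mathlib

open MeasureTheory Real

/-- Standard normal density. -/
noncomputable def stdN (x : ℝ) : ℝ := (Real.sqrt (2 * Real.pi))⁻¹ * Real.exp (-x ^ 2 / 2)

/-- Convolution `g(x;c) = ∫ φ(x−μ) γ₀(μ−c) dμ`. -/
noncomputable def conv (γ₀ : ℝ → ℝ) (c x : ℝ) : ℝ := ∫ μ : ℝ, stdN (x - μ) * γ₀ (μ - c)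

/-- Marginal density `m(x;w,c) = (1−w)φ(x) + w g(x;c)`. -/
noncomputable def marg (γ₀ : ℝ → ℝ) (w c x : ℝ) : ℝ := (1 - w) * stdN x + w * conv γ₀ c x

/-- Posterior CDF of `μ` given `X = x` under the prior `(1−w)δ₀ + w γ₀(·−c)`
and likelihood `X | μ ∼ N(μ,1)`. -/
noncomputable def postCDF (γ₀ : ℝ → ℝ) (w c x t : ℝ) : ℝ :=
  ((1 - w) * stdN x * (if (0:ℝ) ≤ t then 1 else 0)
    + w * ∫ μ in Set.Iic t, stdN (x - μ) * γ₀ (μ - c)) / marg γ₀ w c x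

/-- Posterior median. -/
noncomputable def postMedian (γ₀ : ℝ → ℝ) (w c x : ℝ) : ℝ :=
  sInf {t : ℝ | 1 / 2 ≤ postCDF γ₀ w c x t}

lemma stdN_pos (y : ℝ) : 0 < stdN y :=
  mul_pos (inv_pos.mpr (Real.sqrt_pos.mpr (by positivity))) (Real.exp_pos _)

lemma stdN_anti {u v : ℝ} (h : |u| ≤ |v|) : stdN v ≤ stdN u := by
  unfold stdN
  apply mul_le_mul_of_nonneg_left _ (inv_nonneg.mpr (Real.sqrt_nonneg _))
  apply Real.exp_le_exp.mpr
  have h2 : u ^ 2 ≤ v ^ 2 := by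
    calc u ^ 2 = |u| ^ 2 := (sq_abs u).symm
    _ ≤ |v| ^ 2 := by exact pow_le_pow_left₀ (abs_nonneg u) h 2
    _ = v ^ 2 := sq_abs v
  linarith

lemma stdN_continuous : Continuous stdN := by
  unfold stdN; continuity

lemma stdN_le_bound (y : ℝ) : stdN y ≤ (Real.sqrt (2 * Real.pi))⁻¹ := by
  unfold stdN
  have h1 : Real.exp (-y ^ 2 / 2) ≤ 1 := Real.exp_le_one_iff.mpr (by nlinarith [sq_nonneg y])
  have h2 : (0:ℝ) ≤ (Real.sqrt (2 * Real.pi))⁻¹ := inv_nonneg.mpr (Real.sqrt_nonneg _)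
  nlinarith

/-- reflection change of variables -/
lemma setint_reflect (f : ℝ → ℝ) (a : ℝ) :
    ∫ μ in Set.Ioi a, f (2 * a - μ) = ∫ μ in Set.Iio a, f μ := by
  rw [← integral_indicator measurableSet_Ioi, ← integral_indicator measurableSet_Iio]
  have key : ∀ μ : ℝ, Set.indicator (Set.Ioi a) (fun μ => f (2 * a - μ)) μ
      = Set.indicator (Set.Iio a) f (2 * a - μ) := by
    intro μ
    by_cases h : a < μ
    · rw [Set.indicator_of_mem (show μ ∈ Set.Ioi a from h),
        Set.indicator_of_mem (show 2 * a - μ ∈ Set.Iio a by simp only [Set.mem_Iio]; linarith)]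
    · rw [Set.indicator_of_notMem (show μ ∉ Set.Ioi a from h),
        Set.indicator_of_notMem (show 2 * a - μ ∉ Set.Iio a by
          simp only [Set.mem_Iio]; push_neg at h ⊢; linarith)]
  simp_rw [key]
  have h2 : ∀ μ : ℝ, (2 * a - μ) = -(μ - 2 * a) := fun μ => by ring
  simp_rw [h2]
  rw [integral_sub_right_eq_self (fun v => Set.indicator (Set.Iio a) f (-v)) (2 * a)]
  exact integral_neg_eq_self _ _

lemma setint_reflect' (f : ℝ → ℝ) (a : ℝ) :
    ∫ μ in Set.Iio a, f (2 * a - μ) = ∫ μ in Set.Ioi a, f μ := by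
  have := setint_reflect (fun μ => f (2 * a - μ)) a
  simp only [sub_sub_cancel] at this
  exact this.symm

lemma half_right (f : ℝ → ℝ) (hi : Integrable f) (hnn : ∀ μ, 0 ≤ f μ) (a : ℝ)
    (hrefl : ∀ μ, a ≤ μ → f μ ≤ f (2 * a - μ)) :
    (∫ μ, f μ) / 2 ≤ ∫ μ in Set.Iic a, f μ := by
  have hic : Integrable (fun μ => f (2 * a - μ)) := by
    have h1 := (hi.comp_neg).comp_sub_right (2 * a)
    simpa only [neg_sub] using h1
  have h1 : ∫ μ in Set.Ioi a, f μ ≤ ∫ μ in Set.Ioi a, f (2 * a - μ) := by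
    apply setIntegral_mono_on hi.integrableOn hic.integrableOn measurableSet_Ioi
    intro μ hμ; exact hrefl μ (le_of_lt hμ)
  have h2 : ∫ μ in Set.Ioi a, f (2 * a - μ) = ∫ μ in Set.Iio a, f μ := setint_reflect f a
  have h3 : ∫ μ in Set.Iio a, f μ = ∫ μ in Set.Iic a, f μ := setIntegral_congr_set Iio_ae_eq_Iic
  have h4 : (∫ μ in Set.Iic a, f μ) + ∫ μ in Set.Ioi a, f μ = ∫ μ, f μ :=
    intervalIntegral.integral_Iic_add_Ioi hi.integrableOn hi.integrableOn
  linarith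

lemma half_left (f : ℝ → ℝ) (hi : Integrable f) (hnn : ∀ μ, 0 ≤ f μ) (a : ℝ)
    (hrefl : ∀ μ, μ ≤ a → f μ ≤ f (2 * a - μ)) :
    ∫ μ in Set.Iic a, f μ ≤ (∫ μ, f μ) / 2 := by
  have hic : Integrable (fun μ => f (2 * a - μ)) := by
    have h1 := (hi.comp_neg).comp_sub_right (2 * a)
    simpa only [neg_sub] using h1
  have h1 : ∫ μ in Set.Iio a, f μ ≤ ∫ μ in Set.Iio a, f (2 * a - μ) := by
    apply setIntegral_mono_on hi.integrableOn hic.integrableOn measurableSet_Iio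
    intro μ hμ; exact hrefl μ (le_of_lt hμ)
  have h2 : ∫ μ in Set.Iio a, f (2 * a - μ) = ∫ μ in Set.Ioi a, f μ := setint_reflect' f a
  have h3 : ∫ μ in Set.Iio a, f μ = ∫ μ in Set.Iic a, f μ := setIntegral_congr_set Iio_ae_eq_Iic
  have h4 : (∫ μ in Set.Iic a, f μ) + ∫ μ in Set.Ioi a, f μ = ∫ μ, f μ :=
    intervalIntegral.integral_Iic_add_Ioi hi.integrableOn hi.integrableOn
  linarith

/-- Under the prior `(1−w)δ₀ + w γ₀(·−c)` with `γ₀` symmetric about `0` and unimodal,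
and likelihood `X | μ ∼ N(μ,1)`, the posterior median satisfies
`|δ(x;w,c)| ≤ |x| ∨ |c|` for all `x`, all `w ∈ [0,1]` and all `c`. -/
theorem stmt2 (γ₀ : ℝ → ℝ) (hmeas : Measurable γ₀) (hnonneg : ∀ u, 0 ≤ γ₀ u)
    (hint : Integrable γ₀) (hdens : ∫ u : ℝ, γ₀ u = 1)
    (hsymm : ∀ u, γ₀ (-u) = γ₀ u)
    (hunimodal : ∀ u v : ℝ, |u| ≤ |v| → γ₀ v ≤ γ₀ u) :
    ∀ (x w c : ℝ), 0 ≤ w → w ≤ 1 → |postMedian γ₀ w c x| ≤ max |x| |c| := by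
  intro x w c hw0 hw1
  set M : ℝ := max |x| |c| with hMdef
  obtain ⟨hxm, hxM⟩ := abs_le.mp (le_max_left |x| |c|)
  obtain ⟨hcm, hcM⟩ := abs_le.mp (le_max_right |x| |c|)
  have hM0 : 0 ≤ M := le_trans (abs_nonneg x) (le_max_left _ _)
  set k : ℝ → ℝ := fun μ => stdN (x - μ) * γ₀ (μ - c) with hkdef
  have hknn : ∀ μ, 0 ≤ k μ := fun μ => mul_nonneg (stdN_pos _).le (hnonneg _)
  have hki : Integrable k := by
    have h1 : Integrable (fun μ => γ₀ (μ - c)) := hint.comp_sub_right c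
    have h2 : AEStronglyMeasurable (fun μ : ℝ => stdN (x - μ)) volume :=
      (stdN_continuous.comp (continuous_const.sub continuous_id)).aestronglyMeasurable
    exact h1.bdd_mul (c := (Real.sqrt (2 * Real.pi))⁻¹) h2 (ae_of_all _ fun μ => by
      rw [Real.norm_eq_abs, abs_of_nonneg (stdN_pos _).le]; exact stdN_le_bound _)
  have hGpos : 0 < ∫ μ, k μ := by
    rcases lt_or_eq_of_le (integral_nonneg (f := k) hknn) with h | h
    · exact h
    · exfalso
      have hae : k =ᵐ[volume] 0 := (integral_eq_zero_iff_of_nonneg hknn hki).mp h.symm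
      have hae2 : (fun μ => γ₀ (μ - c)) =ᵐ[volume] 0 := by
        filter_upwards [hae] with μ hμ
        have := mul_eq_zero.mp hμ
        rcases this with h1 | h1
        · exact absurd h1 (stdN_pos _).ne'
        · exact h1
      have : ∫ μ, γ₀ (μ - c) = 0 := by
        rw [integral_congr_ae hae2]; simp
      rw [integral_sub_right_eq_self γ₀ c, hdens] at this
      norm_num at this
  have hmpos : 0 < marg γ₀ w c x := by
    unfold marg conv
    have hconv : (0:ℝ) < ∫ μ : ℝ, stdN (x - μ) * γ₀ (μ - c) := hGpos
    rcases lt_or_eq_of_le hw1 with h1 | h1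
    · have hA : 0 < (1 - w) * stdN x := mul_pos (by linarith) (stdN_pos x)
      have hB : 0 ≤ w * ∫ μ : ℝ, stdN (x - μ) * γ₀ (μ - c) :=
        mul_nonneg hw0 hconv.le
      linarith
    · subst h1; simpa using hconv
  -- reflection inequalities
  have hreflR : ∀ μ, M ≤ μ → k μ ≤ k (2 * M - μ) := by
    intro μ hμ
    have h1 : |x - (2 * M - μ)| ≤ |x - μ| := by
      rw [abs_of_nonpos (by linarith : x - μ ≤ 0), abs_le]
      constructor <;> linarith
    have h2 : |(2 * M - μ) - c| ≤ |μ - c| := by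
      rw [abs_of_nonneg (by linarith : (0:ℝ) ≤ μ - c), abs_le]
      constructor <;> linarith
    exact mul_le_mul (stdN_anti h1) (hunimodal _ _ h2) (hnonneg _) (stdN_pos _).le
  have hreflL : ∀ μ, μ ≤ -M → k μ ≤ k (2 * (-M) - μ) := by
    intro μ hμ
    have h1 : |x - (2 * (-M) - μ)| ≤ |x - μ| := by
      rw [abs_of_nonneg (by linarith : (0:ℝ) ≤ x - μ), abs_le]
      constructor <;> linarith
    have h2 : |(2 * (-M) - μ) - c| ≤ |μ - c| := by
      rw [abs_of_nonpos (by linarith : μ - c ≤ 0), abs_le]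
      constructor <;> linarith
    exact mul_le_mul (stdN_anti h1) (hunimodal _ _ h2) (hnonneg _) (stdN_pos _).le
  have hIicM : (∫ μ, k μ) / 2 ≤ ∫ μ in Set.Iic M, k μ := half_right k hki hknn M hreflR
  have hIicnegM : (∫ μ in Set.Iic (-M), k μ) ≤ (∫ μ, k μ) / 2 := half_left k hki hknn (-M) hreflL
  -- membership of M
  have hmem : (1:ℝ) / 2 ≤ postCDF γ₀ w c x M := by
    unfold postCDF
    rw [if_pos hM0, le_div_iff₀ hmpos]
    unfold marg conv
    have hw' : w * ((∫ μ, k μ) / 2) ≤ w * ∫ μ in Set.Iic M, k μ :=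
      mul_le_mul_of_nonneg_left hIicM hw0
    have hφ : 0 ≤ (1 - w) * stdN x := mul_nonneg (by linarith) (stdN_pos x).le
    show 1 / 2 * ((1 - w) * stdN x + w * ∫ μ, k μ)
      ≤ (1 - w) * stdN x * 1 + w * ∫ μ in Set.Iic M, k μ
    nlinarith
  -- lower bound for the set
  have hlb : ∀ t ∈ {t : ℝ | 1 / 2 ≤ postCDF γ₀ w c x t}, -M ≤ t := by
    intro t ht
    by_contra hcon
    push_neg at hcon
    simp only [Set.mem_setOf_eq] at ht
    unfold postCDF at ht
    rw [if_neg (by push_neg; linarith), le_div_iff₀ hmpos] at ht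
    unfold marg conv at ht
    have hA : 1 / 2 * ((1 - w) * stdN x + w * ∫ μ, k μ)
        ≤ (1 - w) * stdN x * 0 + w * ∫ μ in Set.Iic t, k μ := ht
    have hts : (∫ μ in Set.Iic t, k μ) ≤ ∫ μ in Set.Iic (-M), k μ := by
      apply setIntegral_mono_set hki.integrableOn (ae_of_all _ hknn)
      exact HasSubset.Subset.eventuallyLE (Set.Iic_subset_Iic.mpr hcon.le)
    rcases lt_or_eq_of_le hw1 with h1 | h1
    · have hφ : 0 < (1 - w) * stdN x := mul_pos (by linarith) (stdN_pos x)
      have hw' : w * (∫ μ in Set.Iic t, k μ) ≤ w * ((∫ μ, k μ) / 2) :=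
        mul_le_mul_of_nonneg_left (hts.trans hIicnegM) hw0
      nlinarith
    · -- w = 1
      subst h1
      simp only [sub_self, zero_mul, one_mul, mul_zero, zero_add] at hA
      -- hA : 1/2 * ∫ k ≤ ∫_{Iic t} k ; derive contradiction
      have hstrict : (∫ μ in Set.Iic t, k μ) < (∫ μ, k μ) / 2 := by
        by_cases hz : ∃ s, s ∈ Set.Ioo (t - c) (-M - c) ∧ γ₀ s = 0
        · obtain ⟨s, ⟨hs1, hs2⟩, hs0⟩ := hz
          have hsneg : s < 0 := by linarith
          have hzero : Set.EqOn k (fun _ => (0:ℝ)) (Set.Iic t) := by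
            intro μ hμ
            have hμt : μ ≤ t := hμ
            have hg : γ₀ (μ - c) = 0 := by
              refine le_antisymm ?_ (hnonneg _)
              have := hunimodal s (μ - c) (by
                rw [abs_of_neg hsneg, abs_of_neg (by linarith : μ - c < 0)]; linarith)
              rw [hs0] at this; exact this
            show stdN (x - μ) * γ₀ (μ - c) = 0
            rw [hg, mul_zero]
          have h0 : (∫ μ in Set.Iic t, k μ) = 0 := by
            rw [setIntegral_congr_fun measurableSet_Iic hzero]; simp
          rw [h0]; linarith
        · push_neg at hz
          have hpos : 0 < ∫ μ in Set.Ioo t (-M), k μ := by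
            rw [setIntegral_pos_iff_support_of_nonneg_ae (ae_of_all _ hknn) hki.integrableOn]
            have hsub : Set.Ioo t (-M) ⊆ Function.support k ∩ Set.Ioo t (-M) := by
              intro μ hμ
              refine ⟨?_, hμ⟩
              have hγ : γ₀ (μ - c) ≠ 0 := hz (μ - c) ⟨by linarith [hμ.1], by linarith [hμ.2]⟩
              exact mul_ne_zero (stdN_pos _).ne' hγ
            calc (0:ENNReal) < volume (Set.Ioo t (-M)) := by
                  rw [Real.volume_Ioo]; exact ENNReal.ofReal_pos.mpr (by linarith)
              _ ≤ volume (Function.support k ∩ Set.Ioo t (-M)) := measure_mono hsub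
          have hsplit : (∫ μ in Set.Iic (-M), k μ)
              = (∫ μ in Set.Iic t, k μ) + ∫ μ in Set.Ioc t (-M), k μ := by
            rw [← setIntegral_union (Set.Iic_disjoint_Ioc le_rfl) measurableSet_Ioc
              hki.integrableOn hki.integrableOn, Set.Iic_union_Ioc_eq_Iic hcon.le]
          have hoo : (∫ μ in Set.Ioo t (-M), k μ) ≤ ∫ μ in Set.Ioc t (-M), k μ := by
            apply setIntegral_mono_set hki.integrableOn (ae_of_all _ hknn)
            exact HasSubset.Subset.eventuallyLE Set.Ioo_subset_Ioc_self
          linarith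
      linarith
  -- conclude
  have hbdd : BddBelow {t : ℝ | 1 / 2 ≤ postCDF γ₀ w c x t} := ⟨-M, hlb⟩
  have h1 : postMedian γ₀ w c x ≤ M := csInf_le hbdd hmem
  have h2 : -M ≤ postMedian γ₀ w c x := le_csInf ⟨M, hmem⟩ hlb
  exact abs_le.mpr ⟨h2, h1⟩
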